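/- arXiv:2507.11698 — 4 statements merged into one kernel-verified Lean document; each statement's English description precedes it below -/
import Mathlib

section
/- If d = (d_1,...,d_n) is an increasing tuple of positive rationals lying in Mord and d' = (d'_1,...,d'_n) is a tuple of positive rationals with d' > d lexicographically, then there exists a ∈ ℕ^n with ∑_j a_j/d_j ≥ 1 but ∑_j a_j/d'_j < 1; that is, I_d is not contained in I_{d'}. -/
/-- `Mord`: increasing tuples of positive rationals such that for each `i` there exist
naturals `a₁,…,a_i` with `a_i ≠ 0` and `∑_{j≤i} a_j / d_j = 1`. -/
def Mord {n : ℕ} (d : Fin n → ℚ) : Prop :=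
  (∀ j, 0 < d j) ∧ Monotone d ∧
    ∀ i : Fin n, ∃ a : Fin n → ℕ, a i ≠ 0 ∧ (∀ j, i < j → a j = 0) ∧
      ∑ j, (a j : ℚ) / d j = 1

/-- Lexicographic strict order on tuples: `d < d'`. -/
def lexLt {n : ℕ} (d d' : Fin n → ℚ) : Prop :=
  ∃ k : Fin n, (∀ j, j < k → d j = d' j) ∧ d k < d' k

/-- If  and  lexicographically, then . -/
theorem Id_not_subset_of_mord_lexLt {n : ℕ} (d d' : Fin n → ℚ) (hd : Mord d)
    (hd' : ∀ j, 0 < d' j) (hlt : lexLt d d') :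
    ∃ a : Fin n → ℕ, 1 ≤ ∑ j, (a j : ℚ) / d j ∧ ∑ j, (a j : ℚ) / d' j < 1 := by
  obtain ⟨k, heq, hk⟩ := hlt
  obtain ⟨a, hak, hzero, hsum⟩ := hd.2.2 k
  refine ⟨a, le_of_eq hsum.symm, ?_⟩
  rw [← hsum]
  refine Finset.sum_lt_sum (fun j _ => ?_) ⟨k, Finset.mem_univ k, ?_⟩
  · rcases lt_trichotomy j k with h | h | h
    · rw [heq j h]
    · subst h
      exact div_le_div_of_nonneg_left (Nat.cast_nonneg _) (hd.1 j) hk.le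
    · simp [hzero j h]
  · have hpos : (0 : ℚ) < a k := by
      exact_mod_cast Nat.pos_of_ne_zero hak
    exact div_lt_div_of_pos_left hpos (hd.1 k) hk
end

section
/- If d = (d_1,...,d_n) is an increasing tuple of positive rationals not lying in Mord, then there exists a tuple d' = (d'_1,...,d'_n) of positive rationals with d' > d lexicographically such that I_d ⊆ I_{d'}. -/
/-- If an increasing tuple of positive rationals is not in , then 
for some lexicographically larger tuple . -/
theorem exists_lex_gt_of_not_mord {n : ℕ} (d : Fin n → ℚ) (hpos : ∀ j, 0 < d j)
    (hmono : Monotone d)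
    (h : ¬ ∀ i : Fin n, ∃ a : Fin n → ℕ, a i ≠ 0 ∧ (∀ j, i < j → a j = 0) ∧
        ∑ j, (a j : ℚ) / d j = 1) :
    ∃ d' : Fin n → ℚ, (∀ j, 0 < d' j) ∧ lexLt d d' ∧
      ∀ a : Fin n → ℕ, 1 ≤ ∑ j, (a j : ℚ) / d j → 1 ≤ ∑ j, (a j : ℚ) / d' j := by
  unfold lexLt
  push_neg at h
  obtain ⟨i, hi⟩ := h
  have hnum : ∀ j, 0 < (d j).num := fun j => Rat.num_pos.mpr (hpos j)
  set Nz : ℤ := ∏ j, (d j).num with hNzdef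
  have hNz : 0 < Nz := Finset.prod_pos (fun j _ => hnum j)
  have hNzQ : (0:ℚ) < (Nz:ℚ) := by exact_mod_cast hNz
  have hNz1 : (1:ℚ) ≤ (Nz:ℚ) := by exact_mod_cast hNz
  -- each Nz / d j is an integer
  have hc : ∀ j, ∃ c : ℤ, ((Nz:ℚ)) / d j = (c:ℚ) := by
    intro j
    obtain ⟨k, hk⟩ := Finset.dvd_prod_of_mem (fun j => (d j).num) (Finset.mem_univ j)
    refine ⟨k * (d j).den, ?_⟩
    have hd : (d j) = ((d j).num : ℚ) / ((d j).den : ℚ) := (Rat.num_div_den _).symm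
    have hden0 : ((d j).den : ℚ) ≠ 0 := by exact_mod_cast (d j).den_nz
    have h1 : d j * ((d j).den : ℚ) = ((d j).num : ℚ) := by
      nth_rewrite 1 [hd]; exact div_mul_cancel₀ _ hden0
    have h2 : (Nz : ℚ) = ((d j).num : ℚ) * (k : ℚ) := by exact_mod_cast hk
    rw [eq_comm, eq_div_iff (hpos j).ne']
    push_cast
    linear_combination (k:ℚ) * h1 - h2
  choose c hcc using hc
  refine ⟨fun j => if j < i then d j else if j = i then d i * ((Nz:ℚ)+1)/(Nz:ℚ) else 1,
    ?_, ⟨i, ?_, ?_⟩, ?_⟩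
  · intro j
    by_cases h1 : j < i
    · simpa [h1] using hpos j
    · by_cases h2 : j = i
      · dsimp only; rw [if_neg h1, if_pos h2]
        have := hpos i; positivity
      · simp [h1, h2]
  · intro j hj; simp [hj]
  · dsimp only; rw [if_neg (lt_irrefl i), if_pos rfl]
    have hlt : (1:ℚ) < ((Nz:ℚ)+1)/(Nz:ℚ) := by
      rw [lt_div_iff₀ hNzQ]; linarith
    calc d i = d i * 1 := by ring
      _ < d i * (((Nz:ℚ)+1)/(Nz:ℚ)) := mul_lt_mul_of_pos_left hlt (hpos i)
      _ = d i * ((Nz:ℚ)+1)/(Nz:ℚ) := by ring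
  · intro a ha
    dsimp only
    have hd'pos : ∀ j, (0:ℚ) < (if j < i then d j else if j = i then d i * ((Nz:ℚ)+1)/(Nz:ℚ) else 1) := by
      intro j
      by_cases h1 : j < i
      · simpa [h1] using hpos j
      · by_cases h2 : j = i
        · rw [if_neg h1, if_pos h2]
          have := hpos i; positivity
        · simp [h1, h2]
    by_cases hsupp : ∀ j, i < j → a j = 0
    · by_cases hai : a i = 0
      · have heq : ∑ j, (a j : ℚ) / (if j < i then d j else if j = i then d i * ((Nz:ℚ)+1)/(Nz:ℚ) else 1)
            = ∑ j, (a j : ℚ) / d j := by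
          apply Finset.sum_congr rfl
          intro j _
          rcases lt_trichotomy j i with hj | hj | hj
          · simp [hj]
          · subst hj; simp [hai]
          · simp [hsupp j hj]
        rw [heq]; exact ha
      · set S := ∑ j, (a j : ℚ) / d j with hS
        have hSne : S ≠ 1 := hi a hai hsupp
        have hS1 : 1 < S := lt_of_le_of_ne ha (Ne.symm hSne)
        have hint : ∃ m : ℤ, (Nz:ℚ) * S = (m:ℚ) := by
          refine ⟨∑ j, (a j : ℤ) * c j, ?_⟩
          rw [hS, Finset.mul_sum]
          push_cast
          apply Finset.sum_congr rfl
          intro j _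
          rw [← hcc j]
          ring
        obtain ⟨m, hm⟩ := hint
        have hmgt : Nz < m := by
          have h2 : (Nz:ℚ) < (m:ℚ) := by nlinarith
          exact_mod_cast h2
        have hSge : ((Nz:ℚ)+1)/(Nz:ℚ) ≤ S := by
          have hm1 : (Nz:ℚ) + 1 ≤ (m:ℚ) := by exact_mod_cast hmgt
          rw [div_le_iff₀ hNzQ]
          nlinarith
        have hterm : (a i : ℚ) / d i ≤ S := by
          rw [hS]
          apply Finset.single_le_sum (f := fun j => (a j : ℚ) / d j)
          · intro j _
            have := hpos j; positivity
          · exact Finset.mem_univ i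
        have hN1 : (0:ℚ) < (Nz:ℚ) + 1 := by positivity
        have hdiff : ∑ j, (a j : ℚ) / (if j < i then d j else if j = i then d i * ((Nz:ℚ)+1)/(Nz:ℚ) else 1)
            = S - ((a i : ℚ) / d i) / ((Nz:ℚ)+1) := by
          have hsub : S - ∑ j, (a j : ℚ) / (if j < i then d j else if j = i then d i * ((Nz:ℚ)+1)/(Nz:ℚ) else 1)
              = ((a i : ℚ) / d i) / ((Nz:ℚ)+1) := by
            rw [hS, ← Finset.sum_sub_distrib]
            rw [Finset.sum_eq_single i]
            · rw [if_neg (lt_irrefl i), if_pos rfl]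
              have hdi : d i ≠ 0 := (hpos i).ne'
              field_simp
              ring
            · intro j _ hji
              rcases lt_trichotomy j i with hj | hj | hj
              · simp [hj]
              · exact absurd hj hji
              · simp [hsupp j hj]
            · simp
          linarith
        rw [hdiff]
        set t := (a i : ℚ) / d i with ht
        have h3 : t/((Nz:ℚ)+1)*((Nz:ℚ)+1) = t := div_mul_cancel₀ _ hN1.ne'
        have hSN : (Nz:ℚ) + 1 ≤ S * (Nz:ℚ) := by
          rw [div_le_iff₀ hNzQ] at hSge; linarith
        nlinarith [h3, hterm, hSN, hN1, hNzQ]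
    · push_neg at hsupp
      obtain ⟨j, hji, haj⟩ := hsupp
      have hdj : (if j < i then d j else if j = i then d i * ((Nz:ℚ)+1)/(Nz:ℚ) else 1) = 1 := by
        have h1 : ¬ j < i := not_lt.mpr hji.le
        have h2 : j ≠ i := hji.ne'
        simp [h1, h2]
      have haj1 : (1:ℚ) ≤ (a j : ℚ) := by exact_mod_cast Nat.one_le_iff_ne_zero.mpr haj
      calc (1:ℚ) ≤ (a j : ℚ) / (if j < i then d j else if j = i then d i * ((Nz:ℚ)+1)/(Nz:ℚ) else 1) := by
            rw [hdj]; simpa using haj1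
        _ ≤ ∑ k, (a k : ℚ) / (if k < i then d k else if k = i then d i * ((Nz:ℚ)+1)/(Nz:ℚ) else 1) := by
            apply Finset.single_le_sum (f := fun k => (a k:ℚ)/_)
            · intro k _
              have := hd'pos k
              positivity
            · exact Finset.mem_univ j
end

section
/- Every d = (d_1,...,d_n) ∈ Mord lies in Q_1; that is, the numbers e_1,...,e_n defined recursively by e_i = d_i · ∏_{j=1}^{i-1} (e_j - 1)! are all positive integers. -/
noncomputable def mordEv {n : ℕ} (d : Fin n → ℚ) : ℕ → ℕ
  | i =>
    if h : i < n then
      (d ⟨i, h⟩ * ∏ j ∈ (Finset.range i).attach,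
        ((mordEv d j.1 - 1).factorial : ℚ)).num.toNat
    else 0
  termination_by i => i
  decreasing_by exact Finset.mem_range.mp j.2

lemma mordEv_def {n : ℕ} (d : Fin n → ℚ) (i : ℕ) (h : i < n) :
    mordEv d i = (d ⟨i, h⟩ * ∏ j ∈ Finset.range i,
      ((mordEv d j - 1).factorial : ℚ)).num.toNat := by
  rw [mordEv, dif_pos h, Finset.prod_attach (Finset.range i)
    (fun j => ((mordEv d j - 1).factorial : ℚ))]

lemma mordEv_spec {n : ℕ} (d : Fin n → ℚ) (hd : Mord d) :
    ∀ m, ∀ h : m < n, 0 < mordEv d m ∧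
      (mordEv d m : ℚ) = d ⟨m, h⟩ * ∏ j ∈ Finset.range m,
        ((mordEv d j - 1).factorial : ℚ) := by
  intro m
  induction m using Nat.strong_induction_on with
  | _ m IH =>
  intro h
  obtain ⟨hdpos, hmono, hrep⟩ := hd
  set i : Fin n := ⟨m, h⟩ with hi
  obtain ⟨a, hane, hagt, hsum⟩ := hrep i
  -- notation
  set N : ℕ → ℕ := fun k => ∏ j ∈ Finset.range k, (mordEv d j - 1).factorial with hNdef
  set S : ℕ → ℚ := fun k =>
    ∑ j ∈ Finset.univ.filter (fun j : Fin n => (j : ℕ) < k), (a j : ℚ) / d j with hSdef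
  -- split of the total sum
  have hsplit : (1 : ℚ) = S m + (a i : ℚ) / d i := by
    have hsp : (∑ j ∈ Finset.univ.filter (fun j : Fin n => (j : ℕ) < m), (a j : ℚ) / d j)
        + ∑ j ∈ Finset.univ.filter (fun j : Fin n => ¬ (j : ℕ) < m), (a j : ℚ) / d j
        = ∑ j : Fin n, (a j : ℚ) / d j :=
      Finset.sum_filter_add_sum_filter_not Finset.univ _ _
    rw [← hsum, ← hsp]
    congr 1
    apply Finset.sum_eq_single_of_mem i
    · simp [hi]
    · intro j hj hji
      have hjm : ¬ (j : ℕ) < m := by simpa using (Finset.mem_filter.mp hj).2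
      have : i < j := by
        rcases lt_or_eq_of_le (not_lt.mp hjm) with h1 | h1
        · exact h1
        · exact absurd (Fin.ext h1.symm) hji
      simp [hagt j this]
  have haipos : (0 : ℚ) < (a i : ℚ) / d i := by
    apply div_pos _ (hdpos i)
    exact_mod_cast Nat.pos_of_ne_zero hane
  -- positivity of the tails
  have hTpos : ∀ k, k ≤ m → 0 < 1 - S k := by
    intro k hk
    have hsub : S k ≤ S m := by
      apply Finset.sum_le_sum_of_subset_of_nonneg
      · intro j hj
        simp only [Finset.mem_filter, Finset.mem_univ, true_and] at hj ⊢
        exact lt_of_lt_of_le hj hk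
      · intro j _ _
        exact div_nonneg (by positivity) (le_of_lt (hdpos j))
    have : 1 - S m = (a i : ℚ) / d i := by linarith
    linarith
  -- the filter-insert step
  have hinsert : ∀ k (hk : k < m),
      (Finset.univ.filter (fun j : Fin n => (j : ℕ) < k + 1)) =
        insert (⟨k, lt_trans hk h⟩ : Fin n)
          (Finset.univ.filter (fun j : Fin n => (j : ℕ) < k)) := by
    intro k hk
    ext j
    simp only [Finset.mem_filter, Finset.mem_univ, true_and, Finset.mem_insert,
      Nat.lt_succ_iff_lt_or_eq, Fin.ext_iff]
    tauto
  -- main inner induction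
  have claim : ∀ k, k ≤ m → ∃ u v w : ℕ, 0 < u ∧ 0 < v ∧ 0 < w ∧
      N k = u * w ∧ (1 - S k) * (v : ℚ) = (u : ℚ) := by
    intro k
    induction k with
    | zero =>
      intro _
      refine ⟨1, 1, 1, one_pos, one_pos, one_pos, by simp [hNdef], by simp [hSdef]⟩
    | succ k ih =>
      intro hk1
      have hk : k < m := hk1
      have hkn : k < n := lt_trans hk h
      obtain ⟨u, v, w, hu, hv, hw, hN, hT⟩ := ih (le_of_lt hk)
      set jk : Fin n := ⟨k, hkn⟩ with hjk
      -- e_k facts from outer IH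
      obtain ⟨hekpos, hek⟩ := IH k hk hkn
      set ek : ℕ := mordEv d k with hekdef
      have hNcast : ((N k : ℕ) : ℚ) = ∏ j ∈ Finset.range k, ((mordEv d j - 1).factorial : ℚ) := by
        simp only [hNdef]; exact Nat.cast_prod _ _
      have hekN : (ek : ℚ) = d jk * (N k : ℚ) := by rw [hNcast]; exact hek
      have hdk0 : d jk ≠ 0 := ne_of_gt (hdpos jk)
      have hstep : 1 - S (k + 1) = (1 - S k) - (a jk : ℚ) / d jk := by
        have hins := hinsert k hk
        have hnm : (⟨k, lt_trans hk h⟩ : Fin n) ∉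
            Finset.univ.filter (fun j : Fin n => (j : ℕ) < k) := by simp
        simp only [hSdef]
        rw [hins, Finset.sum_insert hnm]
        ring
      by_cases hA : a jk = 0
      · refine ⟨u, v, w * (ek - 1).factorial, hu, hv,
          Nat.mul_pos hw (Nat.factorial_pos _), ?_, ?_⟩
        · have : N (k + 1) = N k * (ek - 1).factorial := by
            simp [hNdef, Finset.prod_range_succ, hekdef]
          rw [this, hN, mul_assoc]
        · rw [hstep, hA]
          simpa using hT
      · have hA1 : 1 ≤ a jk := Nat.one_le_iff_ne_zero.mpr hA
        have hNuw : ((N k : ℕ) : ℚ) = (u : ℚ) * (w : ℚ) := by exact_mod_cast hN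
        have hfrac : (a jk : ℚ) / d jk * (ek : ℚ) = (a jk : ℚ) * ((N k : ℕ) : ℚ) := by
          rw [hekN]
          field_simp
        have hmain : (1 - S (k + 1)) * ((v : ℚ) * (ek : ℚ)) =
            (u : ℚ) * ((ek : ℚ) - (a jk : ℚ) * (w : ℚ) * (v : ℚ)) := by
          rw [hstep]
          linear_combination (ek : ℚ) * hT - (v : ℚ) * hfrac - (a jk : ℚ) * (v : ℚ) * hNuw
        have hT1 : 0 < 1 - S (k + 1) := hTpos (k + 1) hk1
        have hekQ : (0 : ℚ) < (ek : ℚ) := by exact_mod_cast hekpos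
        have hvQ : (0 : ℚ) < (v : ℚ) := by exact_mod_cast hv
        have huQ : (0 : ℚ) < (u : ℚ) := by exact_mod_cast hu
        have hXpos : (0 : ℚ) < (ek : ℚ) - (a jk : ℚ) * (w : ℚ) * (v : ℚ) := by
          nlinarith [mul_pos hT1 (mul_pos hvQ hekQ)]
        have hZpos : (0 : ℤ) < (ek : ℤ) - (a jk : ℤ) * (w : ℤ) * (v : ℤ) := by
          exact_mod_cast hXpos
        obtain ⟨c, hcc'⟩ : ∃ c : ℕ, (c : ℤ) = (ek : ℤ) - (a jk : ℤ) * (w : ℤ) * (v : ℤ) :=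
          ⟨((ek : ℤ) - (a jk : ℤ) * (w : ℤ) * (v : ℤ)).toNat,
            Int.toNat_of_nonneg (le_of_lt hZpos)⟩
        have hcpos : 0 < c := by
          have : (0 : ℤ) < (c : ℤ) := by rw [hcc']; exact hZpos
          exact_mod_cast this
        have hcQ : ((c : ℕ) : ℚ) = (ek : ℚ) - (a jk : ℚ) * (w : ℚ) * (v : ℚ) := by
          exact_mod_cast hcc'
        have hcle : c ≤ ek - 1 := by
          have h1 : (1 : ℕ) ≤ a jk * w * v := Nat.one_le_iff_ne_zero.mpr (by positivity)
          have h1' : (1 : ℤ) ≤ (a jk : ℤ) * (w : ℤ) * (v : ℤ) := by exact_mod_cast h1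
          have h2 : (c : ℤ) ≤ (ek : ℤ) - 1 := by rw [hcc']; linarith
          omega
        have hcd : c ∣ (ek - 1).factorial := Nat.dvd_factorial hcpos hcle
        obtain ⟨w2, hw2⟩ := hcd
        have hw2pos : 0 < w2 := by
          rcases Nat.eq_zero_or_pos w2 with h0 | h0
          · exfalso
            rw [h0, Nat.mul_zero] at hw2
            exact Nat.factorial_ne_zero _ hw2
          · exact h0
        refine ⟨u * c, v * ek, w * w2, Nat.mul_pos hu hcpos, Nat.mul_pos hv hekpos,
          Nat.mul_pos hw hw2pos, ?_, ?_⟩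
        · have : N (k + 1) = N k * (ek - 1).factorial := by
            simp [hNdef, Finset.prod_range_succ, hekdef]
          rw [this, hN, hw2]; ring
        · push_cast
          rw [hmain, ← hcQ]
  -- conclusion
  obtain ⟨u, v, w, hu, hv, hw, hN, hT⟩ := claim m le_rfl
  have hTm : 1 - S m = (a i : ℚ) / d i := by linarith [hsplit]
  rw [hTm] at hT
  have hd0 : d i ≠ 0 := ne_of_gt (hdpos i)
  have h1 : (a i : ℚ) * v = (u : ℚ) * d i := by
    field_simp at hT
    linarith [hT]

  have hNcast : ((N m : ℕ) : ℚ) = ∏ j ∈ Finset.range m, ((mordEv d j - 1).factorial : ℚ) := by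
    simp only [hNdef]; exact Nat.cast_prod _ _
  have hNuw : ((N m : ℕ) : ℚ) = (u : ℚ) * (w : ℚ) := by exact_mod_cast hN
  obtain ⟨A, hA⟩ : ∃ A : ℕ, A = a i * v * w := ⟨_, rfl⟩
  have hre : d i * ∏ j ∈ Finset.range m, ((mordEv d j - 1).factorial : ℚ)
      = (A : ℚ) := by
    rw [← hNcast, hNuw, hA]
    push_cast
    linear_combination (-(w : ℚ)) * h1
  have hieq : (⟨m, h⟩ : Fin n) = i := rfl
  have hApos : 0 < A := by
    have : 0 < a i := Nat.pos_of_ne_zero hane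
    rw [hA]; positivity
  have hEv : mordEv d m = A := by
    rw [mordEv_def d m h, hieq, hre, Rat.num_natCast, Int.toNat_natCast]
  refine ⟨?_, ?_⟩
  · rw [hEv]; exact hApos
  · rw [hEv]; exact hre.symm

lemma fin_prod_filter_lt {n : ℕ} (i : Fin n) (f : ℕ → ℚ) :
    ∏ j ∈ Finset.univ.filter (· < i), f (j : ℕ) = ∏ j ∈ Finset.range (i : ℕ), f j := by
  refine Finset.prod_nbij' (fun j => (j : ℕ))
    (fun k => if hk : k < n then (⟨k, hk⟩ : Fin n) else i) ?_ ?_ ?_ ?_ ?_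
  · intro j hj
    simp only [Finset.mem_filter, Finset.mem_univ, true_and] at hj
    simpa [Finset.mem_range] using hj
  · intro k hk
    have hki : k < (i : ℕ) := Finset.mem_range.mp hk
    have hkn : k < n := lt_trans hki i.isLt
    show (if hk : k < n then (⟨k, hk⟩ : Fin n) else i) ∈ Finset.filter (· < i) Finset.univ
    rw [dif_pos hkn]
    exact Finset.mem_filter.mpr ⟨Finset.mem_univ _, hki⟩
  · intro j hj
    simp [j.isLt]
  · intro k hk
    have hki : k < (i : ℕ) := Finset.mem_range.mp hk
    have hkn : k < n := lt_trans hki i.isLt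
    show (((if hk : k < n then (⟨k, hk⟩ : Fin n) else i) : Fin n) : ℕ) = k
    rw [dif_pos hkn]
  · intro j hj
    rfl

/-- `Mord ⊆ Q₁`: the numbers `e_i = d_i ∏_{j<i} (e_j - 1)!` are positive integers. -/
theorem mord_subset_Q1 {n : ℕ} (d : Fin n → ℚ) (hd : Mord d) :
    ∃ e : Fin n → ℕ, (∀ i, 0 < e i) ∧
      ∀ i, (e i : ℚ) = d i * ∏ j ∈ Finset.univ.filter (· < i),
        ((e j - 1).factorial : ℚ) := by
  refine ⟨fun i => mordEv d (i : ℕ), fun i => (mordEv_spec d hd (i : ℕ) i.isLt).1, fun i => ?_⟩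
  have h2 := (mordEv_spec d hd (i : ℕ) i.isLt).2
  have : (⟨(i : ℕ), i.isLt⟩ : Fin n) = i := Fin.eta i i.isLt
  rw [this] at h2
  rw [h2]
  congr 1
  exact (fin_prod_filter_lt i (fun k => ((mordEv d k - 1).factorial : ℚ))).symm
end

section
/- For each fixed n, the set Mord_n of tuples in Mord of length n, ordered lexicographically, is well-ordered: every nonempty subset has a least element (equivalently, there is no strictly decreasing infinite sequence in Mord_n). -/
lemma nat_cast_sum_exists {α : Type*} (s : Finset α) (f : α → ℚ)
    (h : ∀ a ∈ s, ∃ c : ℕ, f a = c) : ∃ c : ℕ, ∑ a ∈ s, f a = c := by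
  classical
  induction s using Finset.induction with
  | empty => exact ⟨0, by simp⟩
  | @insert x t hx ih =>
    obtain ⟨c, hc⟩ := h x (Finset.mem_insert_self x t)
    obtain ⟨k, hk⟩ := ih (fun a ha => h a (Finset.mem_insert_of_mem ha))
    exact ⟨c + k, by rw [Finset.sum_insert hx, hc, hk]; push_cast; ring⟩

/-- Key discreteness lemma: once the coordinates below `i` are fixed (equal to those of a
positive tuple `m`), every Mord tuple has its `i`-th coordinate in `(1/L)·ℕ` for a fixed
positive `L`. -/
lemma mord_denom {n : ℕ} (i : Fin n) (m : Fin n → ℚ) (hm0 : ∀ j, 0 < m j) :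
    ∃ L : ℕ, 0 < L ∧ ∀ d : Fin n → ℚ, Mord d → (∀ j, j < i → d j = m j) →
      ∃ c : ℕ, d i * L = c := by
  classical
  set N : ℕ := ∏ j ∈ Finset.univ.filter (· < i), (m j).num.natAbs with hNdef
  have hN : 0 < N := by
    apply Finset.prod_pos
    intro j _
    exact Int.natAbs_pos.mpr (Rat.num_ne_zero.mpr (hm0 j).ne')
  refine ⟨N.factorial, N.factorial_pos, ?_⟩
  intro d hd hagree
  have hd0 : ∀ j, 0 < d j := hd.1
  obtain ⟨a, hai, hgt, hsum⟩ := hd.2.2 i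
  have hsplit : (∑ j ∈ Finset.univ.erase i, (a j : ℚ) / d j) + (a i : ℚ) / d i = 1 := by
    rw [← hsum]
    exact Finset.sum_erase_add Finset.univ _ (Finset.mem_univ i)
  -- the partial sum times N is a natural number
  have hterm : ∀ j ∈ Finset.univ.erase i, ∃ c : ℕ, ((a j : ℚ) / d j) * N = c := by
    intro j hj
    rcases lt_or_gt_of_ne (Finset.ne_of_mem_erase hj) with hlt | hgt'
    · -- j < i
      have hjf : j ∈ Finset.univ.filter (· < i) := by simp [hlt]
      have hNfac' : N = (m j).num.natAbs *
          ∏ x ∈ (Finset.univ.filter (· < i)).erase j, (m x).num.natAbs :=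
        (Finset.mul_prod_erase _ _ hjf).symm
      have hnum : ((m j).num.natAbs : ℚ) = (m j) * (m j).den := by
        have h1 : ((m j).num : ℚ) = (m j) * (m j).den := by
          rw [mul_comm, ← Rat.den_mul_eq_num]
        rw [Nat.cast_natAbs, abs_of_nonneg, h1]
        exact_mod_cast (Rat.num_nonneg).mpr (hm0 j).le
      refine ⟨a j * (m j).den *
        (∏ x ∈ (Finset.univ.filter (· < i)).erase j, (m x).num.natAbs), ?_⟩
      have hmj : (m j) ≠ 0 := (hm0 j).ne'
      rw [hagree j hlt, div_mul_eq_mul_div, div_eq_iff hmj]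
      push_cast [hNfac']
      rw [hnum]
      ring
    · exact ⟨0, by simp [hgt j hgt']⟩
  obtain ⟨k, hk⟩ := nat_cast_sum_exists _ _ hterm
  rw [← Finset.sum_mul] at hk
  -- a i / d i * N = N - k
  have hdi : (d i) ≠ 0 := (hd0 i).ne'
  have hmain : (a i : ℚ) / d i * N = (N : ℚ) - k := by
    have : ((∑ j ∈ Finset.univ.erase i, (a j : ℚ) / d j) + (a i : ℚ) / d i) * N = 1 * N := by
      rw [hsplit]
    rw [add_mul, hk] at this
    linarith
  have hpos : (0 : ℚ) < (a i : ℚ) / d i * N := by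
    apply mul_pos (div_pos _ (hd0 i)) (by exact_mod_cast hN)
    exact_mod_cast Nat.pos_of_ne_zero hai
  have hkN : k < N := by
    by_contra h
    push_neg at h
    have : (N : ℚ) ≤ (k : ℚ) := by exact_mod_cast h
    linarith [hmain, hpos]
  -- d i * (N - k) = a i * N
  have hcross : d i * ((N : ℚ) - k) = (a i : ℚ) * N := by
    have h := hmain
    rw [div_mul_eq_mul_div, div_eq_iff hdi] at h
    rw [mul_comm]
    exact h.symm
  obtain ⟨M, hM⟩ : (N - k) ∣ N.factorial :=
    Nat.dvd_factorial (by omega) (by omega)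
  refine ⟨a i * N * M, ?_⟩
  have hNk : ((N - k : ℕ) : ℚ) = (N : ℚ) - k := by
    push_cast [Nat.cast_sub hkN.le]
    ring
  have : d i * (N.factorial : ℚ) = d i * ((N : ℚ) - k) * M := by
    rw [hM]
    push_cast [hNk]
    ring
  rw [this, hcross]
  push_cast
  ring

/-- `Mord_n` is well-ordered for the lexicographic order: every nonempty subset has a
least element. -/
theorem mord_wellOrdered {n : ℕ} (S : Set (Fin n → ℚ)) (hS : ∀ d ∈ S, Mord d)
    (hne : S.Nonempty) : ∃ m ∈ S, ∀ d ∈ S, ¬ lexLt d m := by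
  classical
  suffices h : ∀ i : ℕ, i ≤ n → ∃ m ∈ S, ∀ d ∈ S, ∀ k : Fin n, k.val < i →
      (∀ j, j < k → d j = m j) → ¬ d k < m k by
    obtain ⟨m, hmS, hmin⟩ := h n le_rfl
    refine ⟨m, hmS, ?_⟩
    rintro d hd ⟨k, h1, h2⟩
    exact hmin d hd k k.isLt h1 h2
  intro i
  induction i with
  | zero =>
    intro _
    obtain ⟨m, hm⟩ := hne
    exact ⟨m, hm, fun d hd k hk _ => absurd hk (by omega)⟩
  | succ i ih =>
    intro hi
    obtain ⟨m, hmS, hmin⟩ := ih (by omega)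
    have hin : i < n := hi
    set i' : Fin n := ⟨i, hin⟩ with hi'def
    obtain ⟨L, hL, hkey⟩ := mord_denom i' m (hS m hmS).1
    set S' : Set (Fin n → ℚ) := {d | d ∈ S ∧ ∀ j : Fin n, j < i' → d j = m j} with hS'def
    have hmS' : m ∈ S' := ⟨hmS, fun _ _ => rfl⟩
    set C : Set ℕ := {c | ∃ d ∈ S', d i' * L = (c : ℚ)} with hCdef
    have hCne : C.Nonempty := by
      obtain ⟨c, hc⟩ := hkey m (hS m hmS) (fun j hj => rfl)
      exact ⟨c, m, hmS', hc⟩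
    obtain ⟨c₀, ⟨d₀, hd₀S', hd₀c⟩, hcmin⟩ := Nat.lt_wfRel.wf.has_min C hCne
    refine ⟨d₀, hd₀S'.1, ?_⟩
    intro d hd k hk h1 h2
    rcases Nat.lt_succ_iff_lt_or_eq.mp hk with hk' | hk'
    · -- k.val < i : contradiction with minimality at stage i
      have hki' : k < i' := hk'
      have hd₀k : d₀ k = m k := hd₀S'.2 k hki'
      refine hmin d hd k hk' (fun j hj => ?_) (hd₀k ▸ h2)
      rw [h1 j hj, hd₀S'.2 j (lt_trans hj hki')]
    · -- k.val = i
      have hk'' : k = i' := Fin.ext hk'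
      subst hk''
      have hdS' : d ∈ S' := ⟨hd, fun j hj => by rw [h1 j hj, hd₀S'.2 j hj]⟩
      obtain ⟨c, hc⟩ := hkey d (hS d hd) (fun j hj => hdS'.2 j hj)
      have hcc : c < c₀ := by
        have hmul := mul_lt_mul_of_pos_right h2 (by exact_mod_cast hL : (0:ℚ) < L)
        rw [hc, hd₀c] at hmul
        exact_mod_cast hmul
      exact hcmin c ⟨d, hdS', hc⟩ hcc
end
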